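/- arXiv:1602.01108 — 2 statements merged into one kernel-verified Lean document; each statement's English description precedes it below -/
import Mathlib

section
/- (Finite-volume metastability of symmetry-breaking states.) Let ρ be a density matrix and L, L_A linear maps on matrices, and let real parameters satisfy 0 < μ ≤ 1, o > 0, N > 0, K ≥ 0, 0 ≤ r ≤ o·N. Assume: (i) L(1) = 0; (ii) L satisfies detailed balance with respect to ρ; (iii) L(X†) = L(X)† for all X; (iv) the difference M := L − L_A satisfies M(Y·A) = M(Y)·A for all Y, and M(1) = 0; (v) ‖L_A(X)‖ ≤ K·‖X‖ for all X; (vi) S = Q + R with S, Q, R Hermitian, Q·R = R·Q, ‖Q‖ ≤ o·N, ‖R‖ ≤ r; (vii) L_A(Q·X) = Q·L_A(X) and L_A(X)·Q = Q·L_A(X) for all X; (viii) extensive fluctuations: tr(ρ·S²) ≥ (μ·o·N)². Define Õ^± := (1 ± S/√(tr(ρ·S²)))/√2. Then the symmetry-breaking states are metastable: |tr(ρ · Õ^± · L(A) · Õ^±)| ≤ 6·K·r·‖A‖ / (μ²·o·N). -/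
open Matrix
open scoped ComplexOrder Matrix.Norms.L2Operator

/-- The symmetry-breaking perturbation operator `Õ⁺ = (1 + S/s)/√2`. -/
noncomputable def tildeOplus {n : Type*} [Fintype n] [DecidableEq n]
    (S : Matrix n n ℂ) (s : ℝ) : Matrix n n ℂ :=
  (Real.sqrt 2 : ℂ)⁻¹ • (1 + ((s : ℂ))⁻¹ • S)

/-- The symmetry-breaking perturbation operator `Õ⁻ = (1 - S/s)/√2`. -/
noncomputable def tildeOminus {n : Type*} [Fintype n] [DecidableEq n]
    (S : Matrix n n ℂ) (s : ℝ) : Matrix n n ℂ :=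
  (Real.sqrt 2 : ℂ)⁻¹ • (1 - ((s : ℂ))⁻¹ • S)

set_option maxHeartbeats 1000000

lemma abs_trace_rho_mul_le {n : Type*} [Fintype n] [DecidableEq n]
    (ρ : Matrix n n ℂ) (hρ : ρ.PosSemidef) (hρtr : ρ.trace = 1) (X : Matrix n n ℂ) :
    ‖(ρ * X).trace‖ ≤ ‖X‖ := by
  classical
  open scoped MatrixOrder in
  obtain ⟨g, hgsa, -, hg2⟩ := CFC.exists_sqrt_of_isSelfAdjoint_of_quasispectrumRestricts
    (a := ρ) hρ.isHermitian (QuasispectrumRestricts.nnreal_of_nonneg hρ.nonneg)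
  have hgh : gᴴ = g := hgsa
  have hstar : ∀ i j, (starRingEnd ℂ) (g j i) = g i j := by
    intro i j
    conv_rhs => rw [← hgh]
    simp [Matrix.conjTranspose_apply]
  have hcyc : (ρ * X).trace = (g * X * g).trace := by
    rw [← hg2, mul_assoc, Matrix.trace_mul_comm]
  set v : n → EuclideanSpace ℂ n := fun i => WithLp.toLp 2 (fun j => g j i) with hv
  have hdiag : ∀ i, (g * X * g) i i =
      (inner ℂ (v i) (WithLp.toLp 2 (X *ᵥ (fun j => g j i)) : EuclideanSpace ℂ n) : ℂ) := by
    intro i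
    simp only [PiLp.inner_apply, RCLike.inner_apply, hv, PiLp.toLp_apply,
      Matrix.mul_apply, Matrix.mulVec, dotProduct, hstar]
    simp only [Finset.sum_mul, Finset.mul_sum]
    rw [Finset.sum_comm]
    exact Finset.sum_congr rfl fun a _ => Finset.sum_congr rfl fun b _ => by ring
  have hnv : ∀ i, (inner ℂ (v i) (v i) : ℂ) = ρ i i := by
    intro i
    rw [← hg2]
    simp only [PiLp.inner_apply, RCLike.inner_apply, hv, PiLp.toLp_apply,
      Matrix.mul_apply]
    exact Finset.sum_congr rfl fun j _ => by rw [hstar, mul_comm]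
  have hnv' : ∀ i, ((‖v i‖ : ℂ))^2 = ρ i i := by
    intro i
    have h := inner_self_eq_norm_sq_to_K (𝕜 := ℂ) (v i)
    rw [hnv i] at h
    exact_mod_cast h.symm
  have hsum : ∑ i, ‖v i‖^2 = 1 := by
    have h1 : ((∑ i, ‖v i‖^2 : ℝ) : ℂ) = 1 := by
      push_cast
      rw [Finset.sum_congr rfl fun i (_ : i ∈ Finset.univ) => hnv' i]
      simpa [Matrix.trace, Matrix.diag] using hρtr
    exact_mod_cast h1
  rw [hcyc]
  have htr : (g * X * g).trace = ∑ i, (g * X * g) i i := rfl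
  rw [htr]
  calc ‖(∑ i, (g * X * g) i i)‖
      ≤ ∑ i, ‖((g * X * g) i i)‖ := norm_sum_le _ _
    _ ≤ ∑ i, ‖X‖ * ‖v i‖^2 := by
        refine Finset.sum_le_sum fun i _ => ?_
        rw [hdiag i]
        calc ‖(inner ℂ (v i) (WithLp.toLp 2 (X *ᵥ (fun j => g j i)) : EuclideanSpace ℂ n) : ℂ)‖
            ≤ ‖v i‖ * ‖(WithLp.toLp 2 (X *ᵥ (fun j => g j i)) : EuclideanSpace ℂ n)‖ :=
              norm_inner_le_norm _ _
          _ ≤ ‖v i‖ * (‖X‖ * ‖v i‖) := by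
              refine mul_le_mul_of_nonneg_left ?_ (norm_nonneg _)
              exact X.l2_opNorm_mulVec (v i)
          _ = ‖X‖ * ‖v i‖^2 := by ring
    _ = ‖X‖ * ∑ i, ‖v i‖^2 := by rw [Finset.mul_sum]
    _ = ‖X‖ := by rw [hsum, mul_one]

/-- Finite-volume metastability of the symmetry-breaking states: for a local Liouvillian `L`
in detailed balance with a steady state `ρ` having extensive fluctuations of an extensive
order parameter `S = Q + R`, the symmetry-breaking states `Õ^± ρ Õ^±` are metastable:
`|tr(ρ Õ^± L(A) Õ^±)| ≤ 6 K r ‖A‖ / (μ² o N)`. -/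
theorem metastability_of_symmetry_breaking_states
    {n : Type*} [Fintype n] [DecidableEq n] [Nonempty n]
    (ρ : Matrix n n ℂ) (hρ : ρ.PosSemidef) (hρtr : ρ.trace = 1)
    (L LA : Module.End ℂ (Matrix n n ℂ))
    (A : Matrix n n ℂ)
    (μ o N K r : ℝ)
    (hμ0 : 0 < μ) (hμ1 : μ ≤ 1) (ho : 0 < o) (hN : 0 < N) (hK : 0 ≤ K)
    (hr0 : 0 ≤ r) (hr : r ≤ o * N)
    -- (i) `L 1 = 0`
    (hL1 : L 1 = 0)
    -- (ii) detailed balance of `L` with respect to `ρ`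
    (hdb : ∀ X Y : Matrix n n ℂ, (ρ * L X * Y).trace = (ρ * X * L Y).trace)
    -- (iii) `L` is star-preserving
    (hLstar : ∀ X : Matrix n n ℂ, L Xᴴ = (L X)ᴴ)
    -- (iv) the difference `M = L − L_A` acts trivially beyond the support of `A`
    (hM : ∀ Y : Matrix n n ℂ, (L - LA) (Y * A) = (L - LA) Y * A)
    (hM1 : (L - LA) 1 = 0)
    -- (v) norm bound on the local part `L_A`
    (hLA : ∀ X : Matrix n n ℂ, ‖LA X‖ ≤ K * ‖X‖)
    -- (vi) decomposition of the order parameter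
    (S Q R : Matrix n n ℂ)
    (hS : S = Q + R) (hSh : Sᴴ = S) (hQh : Qᴴ = Q) (hRh : Rᴴ = R)
    (hQR : Q * R = R * Q)
    (hQn : ‖Q‖ ≤ o * N) (hRn : ‖R‖ ≤ r)
    -- (vii) `L_A` commutes with the far part `Q`
    (hQL : ∀ X : Matrix n n ℂ, LA (Q * X) = Q * LA X)
    (hLQ : ∀ X : Matrix n n ℂ, LA X * Q = Q * LA X)
    -- (viii) extensive fluctuations
    (hfluc : ((μ * o * N) ^ 2 : ℂ) ≤ (ρ * (S * S)).trace) :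
    ‖((ρ * tildeOplus S (Real.sqrt ((ρ * (S * S)).trace.re)) * L A *
        tildeOplus S (Real.sqrt ((ρ * (S * S)).trace.re))).trace)‖
      ≤ 6 * K * r * ‖A‖ / (μ ^ 2 * o * N) ∧
    ‖((ρ * tildeOminus S (Real.sqrt ((ρ * (S * S)).trace.re)) * L A *
        tildeOminus S (Real.sqrt ((ρ * (S * S)).trace.re))).trace)‖
      ≤ 6 * K * r * ‖A‖ / (μ ^ 2 * o * N) := by

  -- basic positivity
  have hm0 : (0:ℝ) < μ * o * N := by positivity
  have hb0 : (0:ℝ) < o * N := by positivity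
  set s : ℝ := Real.sqrt ((ρ * (S * S)).trace.re) with hsdef
  -- `s ≥ μ o N`
  have hms : μ * o * N ≤ s := by
    have h1 : ((μ * o * N : ℝ) ^ 2 : ℝ) ≤ (ρ * (S * S)).trace.re := by
      have h2 := (Complex.le_def.mp hfluc).1
      have h3 : (((μ * o * N : ℝ) : ℂ) ^ 2).re = (μ * o * N : ℝ) ^ 2 := by
        rw [← Complex.ofReal_pow, Complex.ofReal_re]
      calc ((μ * o * N : ℝ) ^ 2 : ℝ) = (((μ * o * N : ℝ) : ℂ) ^ 2).re := h3.symm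
        _ = (((μ:ℂ) * (o:ℂ) * (N:ℂ)) ^ 2).re := by push_cast; ring_nf
        _ ≤ (ρ * (S * S)).trace.re := h2
    calc μ * o * N = Real.sqrt ((μ * o * N) ^ 2) := (Real.sqrt_sq hm0.le).symm
      _ ≤ s := Real.sqrt_le_sqrt h1
  have hs0 : (0:ℝ) < s := lt_of_lt_of_le hm0 hms
  -- algebraic preliminaries
  have hLA1 : LA 1 = 0 := by
    have h := hM1
    rw [LinearMap.sub_apply, hL1, zero_sub, neg_eq_zero] at h
    exact h
  have hBA : L A = LA A := by
    have h := hM 1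
    rw [one_mul, hM1, zero_mul, LinearMap.sub_apply] at h
    exact sub_eq_zero.mp h
  have hBnorm : ‖L A‖ ≤ K * ‖A‖ := by rw [hBA]; exact hLA A
  have hBQ' : L A * Q = Q * L A := by rw [hBA]; exact hLQ A
  have steady : ∀ X : Matrix n n ℂ, (ρ * L X).trace = 0 := by
    intro X
    have h := hdb X 1
    rw [mul_one, hL1, mul_zero, Matrix.trace_zero] at h
    exact h
  have keyP : ∀ P : Matrix n n ℂ, (∀ X, LA (P * X) = P * LA X) →
      (ρ * (P * L A)).trace = 0 := by
    intro P hP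
    have hLAP : LA P = 0 := by
      have h := hP 1
      rw [mul_one, hLA1, mul_zero] at h
      exact h
    have h4 : L P * A = L (P * A) - P * L A := by
      calc L P * A = (L - LA) P * A := by rw [LinearMap.sub_apply, hLAP, sub_zero]
        _ = (L - LA) (P * A) := (hM P).symm
        _ = L (P * A) - LA (P * A) := by rw [LinearMap.sub_apply]
        _ = L (P * A) - P * L A := by rw [hP A, ← hBA]
    have hdbP := hdb P A
    rw [mul_assoc ρ (L P) A, h4, Matrix.mul_sub, Matrix.trace_sub,
      mul_assoc ρ P (L A)] at hdbP
    have h5 : (ρ * L (P * A)).trace = 0 := steady (P * A)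
    rw [h5, zero_sub] at hdbP
    linear_combination (-1/2 : ℂ) * hdbP
  have kQ : (ρ * (Q * L A)).trace = 0 := keyP Q hQL
  have kQQ : (ρ * (Q * Q * L A)).trace = 0 := by
    refine keyP (Q * Q) fun X => ?_
    rw [mul_assoc, hQL, hQL, mul_assoc]
  have hW0 : (ρ * L A).trace = 0 := steady A
  -- trace expansion
  have expand : ∀ v : ℂ,
      (ρ * ((Real.sqrt 2 : ℂ)⁻¹ • (1 + v • S)) * L A *
        ((Real.sqrt 2 : ℂ)⁻¹ • (1 + v • S))).trace
      = (Real.sqrt 2 : ℂ)⁻¹ * (Real.sqrt 2 : ℂ)⁻¹ *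
        ((ρ * L A).trace + v * ((ρ * (S * L A)).trace + (ρ * (L A * S)).trace)
          + v * v * (ρ * (S * (L A * S))).trace) := by
    intro v
    have hmat : ρ * ((Real.sqrt 2 : ℂ)⁻¹ • (1 + v • S)) * L A *
          ((Real.sqrt 2 : ℂ)⁻¹ • (1 + v • S))
        = ((Real.sqrt 2 : ℂ)⁻¹ * (Real.sqrt 2 : ℂ)⁻¹) • (ρ * L A)
          + ((Real.sqrt 2 : ℂ)⁻¹ * (Real.sqrt 2 : ℂ)⁻¹ * v) • (ρ * (S * L A))
          + ((Real.sqrt 2 : ℂ)⁻¹ * (Real.sqrt 2 : ℂ)⁻¹ * v) • (ρ * (L A * S))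
          + ((Real.sqrt 2 : ℂ)⁻¹ * (Real.sqrt 2 : ℂ)⁻¹ * (v * v)) •
              (ρ * (S * (L A * S))) := by
      simp only [Matrix.smul_mul, Matrix.mul_smul, Matrix.mul_add, Matrix.add_mul,
        Matrix.mul_one, Matrix.one_mul, smul_smul, smul_add, mul_assoc]
      module
    rw [hmat]
    simp only [Matrix.trace_add, Matrix.trace_smul, smul_eq_mul]
    ring
  -- vanishing of the Q-parts
  have hSLA : (ρ * (S * L A)).trace = (ρ * (R * L A)).trace := by
    have h1 : S * L A = Q * L A + R * L A := by rw [hS, add_mul]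
    rw [h1, Matrix.mul_add, Matrix.trace_add, kQ, zero_add]
  have hLAS : (ρ * (L A * S)).trace = (ρ * (L A * R)).trace := by
    have h1 : L A * S = Q * L A + L A * R := by rw [hS, mul_add, hBQ']
    rw [h1, Matrix.mul_add, Matrix.trace_add, kQ, zero_add]
  have hSLAS : (ρ * (S * (L A * S))).trace
      = (ρ * (Q * (L A * R))).trace
        + ((ρ * (R * (Q * L A))).trace + (ρ * (R * (L A * R))).trace) := by
    have h1 : S * (L A * S)
        = Q * (Q * L A) + (Q * (L A * R) + (R * (Q * L A) + R * (L A * R))) := by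
      rw [hS]
      simp only [mul_add, add_mul, hBQ']
      abel
    have kQQ' : (ρ * (Q * (Q * L A))).trace = 0 := by
      rw [← mul_assoc Q Q (L A)]; exact kQQ
    rw [h1, Matrix.mul_add, Matrix.trace_add, kQQ', zero_add, Matrix.mul_add,
      Matrix.trace_add, Matrix.mul_add, Matrix.trace_add]
  -- norm bounds
  have ha0 : (0:ℝ) ≤ K * ‖A‖ := mul_nonneg hK (norm_nonneg A)
  have nRB : ‖R * L A‖ ≤ r * (K * ‖A‖) :=
    le_trans (Matrix.l2_opNorm_mul R (L A))
      (mul_le_mul hRn hBnorm (norm_nonneg _) hr0)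
  have nBR : ‖L A * R‖ ≤ K * ‖A‖ * r :=
    le_trans (Matrix.l2_opNorm_mul (L A) R)
      (mul_le_mul hBnorm hRn (norm_nonneg _) ha0)
  have nQBR : ‖Q * (L A * R)‖ ≤ o * N * (K * ‖A‖ * r) :=
    le_trans (Matrix.l2_opNorm_mul Q (L A * R))
      (mul_le_mul hQn nBR (norm_nonneg _) hb0.le)
  have nQB : ‖Q * L A‖ ≤ o * N * (K * ‖A‖) :=
    le_trans (Matrix.l2_opNorm_mul Q (L A))
      (mul_le_mul hQn hBnorm (norm_nonneg _) hb0.le)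
  have nRQB : ‖R * (Q * L A)‖ ≤ r * (o * N * (K * ‖A‖)) :=
    le_trans (Matrix.l2_opNorm_mul R (Q * L A))
      (mul_le_mul hRn nQB (norm_nonneg _) hr0)
  have nRBR : ‖R * (L A * R)‖ ≤ r * (K * ‖A‖ * r) :=
    le_trans (Matrix.l2_opNorm_mul R (L A * R))
      (mul_le_mul hRn nBR (norm_nonneg _) hr0)
  -- trace bounds
  have t1 : ‖(ρ * (R * L A)).trace‖ ≤ r * (K * ‖A‖) :=
    le_trans (abs_trace_rho_mul_le ρ hρ hρtr _) nRB
  have t2 : ‖(ρ * (L A * R)).trace‖ ≤ K * ‖A‖ * r :=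
    le_trans (abs_trace_rho_mul_le ρ hρ hρtr _) nBR
  have t3 : ‖(ρ * (Q * (L A * R))).trace‖ ≤ o * N * (K * ‖A‖ * r) :=
    le_trans (abs_trace_rho_mul_le ρ hρ hρtr _) nQBR
  have t4 : ‖(ρ * (R * (Q * L A))).trace‖ ≤ r * (o * N * (K * ‖A‖)) :=
    le_trans (abs_trace_rho_mul_le ρ hρ hρtr _) nRQB
  have t5 : ‖(ρ * (R * (L A * R))).trace‖ ≤ r * (K * ‖A‖ * r) :=
    le_trans (abs_trace_rho_mul_le ρ hρ hρtr _) nRBR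
  have hc : ‖(Real.sqrt 2 : ℂ)⁻¹ * (Real.sqrt 2 : ℂ)⁻¹‖ = 2⁻¹ := by
    rw [← mul_inv, norm_inv, ← Complex.ofReal_mul, Complex.norm_real, Real.norm_eq_abs,
      Real.mul_self_sqrt (by norm_num : (0:ℝ) ≤ 2), abs_of_nonneg (by norm_num : (0:ℝ) ≤ 2)]
  -- the main estimate, for `v = ± 1/s`
  have main : ∀ v : ℂ, ‖v‖ = s⁻¹ →
      ‖(ρ * ((Real.sqrt 2 : ℂ)⁻¹ • (1 + v • S)) * L A *
        ((Real.sqrt 2 : ℂ)⁻¹ • (1 + v • S))).trace‖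
      ≤ 6 * K * r * ‖A‖ / (μ ^ 2 * o * N) := by
    intro v hv
    rw [expand v, hW0, hSLA, hLAS, hSLAS]
    have step1 : ‖(Real.sqrt 2 : ℂ)⁻¹ * (Real.sqrt 2 : ℂ)⁻¹ *
        (0 + v * ((ρ * (R * L A)).trace + (ρ * (L A * R)).trace)
          + v * v * ((ρ * (Q * (L A * R))).trace
            + ((ρ * (R * (Q * L A))).trace + (ρ * (R * (L A * R))).trace)))‖
        ≤ 2⁻¹ * (s⁻¹ * (r * (K * ‖A‖) + K * ‖A‖ * r)
            + s⁻¹ * s⁻¹ * (o * N * (K * ‖A‖ * r)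
              + (r * (o * N * (K * ‖A‖)) + r * (K * ‖A‖ * r)))) := by
      rw [norm_mul, hc, zero_add]
      refine mul_le_mul_of_nonneg_left ?_ (by norm_num)
      refine le_trans (norm_add_le _ _) ?_
      have e1 : ‖v * ((ρ * (R * L A)).trace + (ρ * (L A * R)).trace)‖
          ≤ s⁻¹ * (r * (K * ‖A‖) + K * ‖A‖ * r) := by
        rw [norm_mul, hv]
        refine mul_le_mul_of_nonneg_left ?_ (by positivity)
        exact le_trans (norm_add_le _ _) (add_le_add t1 t2)
      have e2 : ‖v * v * ((ρ * (Q * (L A * R))).trace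
            + ((ρ * (R * (Q * L A))).trace + (ρ * (R * (L A * R))).trace))‖
          ≤ s⁻¹ * s⁻¹ * (o * N * (K * ‖A‖ * r)
              + (r * (o * N * (K * ‖A‖)) + r * (K * ‖A‖ * r))) := by
        rw [norm_mul, norm_mul, hv]
        refine mul_le_mul_of_nonneg_left ?_ (by positivity)
        refine le_trans (norm_add_le _ _) ?_
        exact add_le_add t3 (le_trans (norm_add_le _ _) (add_le_add t4 t5))
      exact add_le_add e1 e2
    refine le_trans step1 ?_
    -- real arithmetic
    have h1 : s⁻¹ ≤ (μ * o * N)⁻¹ := by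
      rw [inv_le_inv₀ hs0 hm0]
      exact hms
    have step2 : 2⁻¹ * (s⁻¹ * (r * (K * ‖A‖) + K * ‖A‖ * r)
            + s⁻¹ * s⁻¹ * (o * N * (K * ‖A‖ * r)
              + (r * (o * N * (K * ‖A‖)) + r * (K * ‖A‖ * r))))
        ≤ 2⁻¹ * ((μ * o * N)⁻¹ * (r * (K * ‖A‖) + K * ‖A‖ * r)
            + (μ * o * N)⁻¹ * (μ * o * N)⁻¹ * (o * N * (K * ‖A‖ * r)
              + (r * (o * N * (K * ‖A‖)) + r * (K * ‖A‖ * r)))) := by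
      have hnn1 : (0:ℝ) ≤ r * (K * ‖A‖) + K * ‖A‖ * r := by positivity
      have hnn2 : (0:ℝ) ≤ o * N * (K * ‖A‖ * r)
          + (r * (o * N * (K * ‖A‖)) + r * (K * ‖A‖ * r)) := by positivity
      have hss : s⁻¹ * s⁻¹ ≤ (μ * o * N)⁻¹ * (μ * o * N)⁻¹ :=
        mul_le_mul h1 h1 (by positivity) (by positivity)
      refine mul_le_mul_of_nonneg_left ?_ (by norm_num)
      exact add_le_add (mul_le_mul_of_nonneg_right h1 hnn1)
        (mul_le_mul_of_nonneg_right hss hnn2)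
    refine le_trans step2 ?_
    have hEq : 2⁻¹ * ((μ * o * N)⁻¹ * (r * (K * ‖A‖) + K * ‖A‖ * r)
            + (μ * o * N)⁻¹ * (μ * o * N)⁻¹ * (o * N * (K * ‖A‖ * r)
              + (r * (o * N * (K * ‖A‖)) + r * (K * ‖A‖ * r))))
        = (K * ‖A‖ * r) / (μ * (o * N)) + (K * ‖A‖ * r) / (μ ^ 2 * (o * N))
            + (K * ‖A‖ * r * r) / (2 * (μ ^ 2 * (o * N) * (o * N))) := by
      field_simp
      ring
    rw [hEq]
    have d1 : (K * ‖A‖ * r) / (μ * (o * N)) ≤ (K * ‖A‖ * r) / (μ ^ 2 * (o * N)) := by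
      apply div_le_div_of_nonneg_left (by positivity) (by positivity)
      nlinarith
    have d3 : (K * ‖A‖ * r * r) / (2 * (μ ^ 2 * (o * N) * (o * N)))
        ≤ (K * ‖A‖ * r) / (μ ^ 2 * (o * N)) := by
      rw [div_le_div_iff₀ (by positivity) (by positivity)]
      nlinarith [mul_nonneg (mul_nonneg (mul_nonneg (mul_nonneg ha0 hr0) (sq_nonneg μ)) hb0.le)
          (sub_nonneg.mpr hr),
        mul_nonneg (mul_nonneg (mul_nonneg (mul_nonneg ha0 hr0) (sq_nonneg μ)) hb0.le) hb0.le]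
    have dfin : (K * ‖A‖ * r) / (μ ^ 2 * (o * N)) + (K * ‖A‖ * r) / (μ ^ 2 * (o * N))
        + (K * ‖A‖ * r) / (μ ^ 2 * (o * N))
        ≤ 6 * K * r * ‖A‖ / (μ ^ 2 * o * N) := by
      have : 6 * K * r * ‖A‖ / (μ ^ 2 * o * N)
          = 6 * ((K * ‖A‖ * r) / (μ ^ 2 * (o * N))) := by
        field_simp
      rw [this]
      have hpos : (0:ℝ) ≤ (K * ‖A‖ * r) / (μ ^ 2 * (o * N)) := by positivity
      linarith
    calc (K * ‖A‖ * r) / (μ * (o * N)) + (K * ‖A‖ * r) / (μ ^ 2 * (o * N))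
            + (K * ‖A‖ * r * r) / (2 * (μ ^ 2 * (o * N) * (o * N)))
        ≤ (K * ‖A‖ * r) / (μ ^ 2 * (o * N)) + (K * ‖A‖ * r) / (μ ^ 2 * (o * N))
            + (K * ‖A‖ * r) / (μ ^ 2 * (o * N)) := by
          exact add_le_add (add_le_add d1 le_rfl) d3
      _ ≤ 6 * K * r * ‖A‖ / (μ ^ 2 * o * N) := dfin
  constructor
  · have hv : ‖(((s : ℝ) : ℂ))⁻¹‖ = s⁻¹ := by
      rw [norm_inv, Complex.norm_real, Real.norm_eq_abs, abs_of_pos hs0]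
    exact main _ hv
  · have hsub : (1 : Matrix n n ℂ) - ((s : ℝ) : ℂ)⁻¹ • S
        = 1 + (-(((s : ℝ) : ℂ)⁻¹)) • S := by
      rw [neg_smul, ← sub_eq_add_neg]
    have hv : ‖-(((s : ℝ) : ℂ)⁻¹)‖ = s⁻¹ := by
      rw [norm_neg, norm_inv, Complex.norm_real, Real.norm_eq_abs, abs_of_pos hs0]
    have := main _ hv
    rw [tildeOminus, hsub]
    exact this
end

section
/- (Commutators of local observables with powers of the order parameter are subleading.) Let ρ be a density matrix, O⁺ = Q + R and A matrices with Q·R = R·Q and Q·A = A·Q, and reals o > 0, a ≥ 1, x > 0 with ‖R‖ ≤ o·a. Let m, m' be natural numbers and set a_j := tr(Q^j · ρ · (Q†)^j). Assume a_m > 0, a_{m'} > 0 and the decay bounds a_{m−k} ≤ x^{−2k}·a_m for all k ≤ m and a_{m'−k} ≤ x^{−2k}·a_{m'} for all k ≤ m', where x > 0. Then, with O⁻ := (O⁺)†: |tr(ρ · (O⁻)^{m'} · [A, (O⁺)^m])| ≤ 2·‖A‖ · (1 + o·a/x)^{m'} · ((1 + o·a/x)^m − 1) · √(a_m · a_{m'}),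 where [A,B] := A·B − B·A. -/
open Matrix Finset
open scoped ComplexOrder Matrix.Norms.L2Operator MatrixOrder

namespace CommSubAux

variable {n : Type*} [Fintype n] [DecidableEq n]

/-- A matrix viewed as a Euclidean vector (for the Frobenius norm). -/
noncomputable def toE : Matrix n n ℂ →ₗ[ℂ] EuclideanSpace ℂ (n × n) where
  toFun M := WithLp.toLp 2 (fun p : n × n => M p.1 p.2)
  map_add' _ _ := rfl
  map_smul' _ _ := rfl

/-- Frobenius norm of a matrix. -/
noncomputable def fro (M : Matrix n n ℂ) : ℝ := ‖toE M‖

lemma fro_nonneg (M : Matrix n n ℂ) : 0 ≤ fro M := norm_nonneg _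

lemma inner_toE (M N : Matrix n n ℂ) :
    (inner ℂ (toE M) (toE N) : ℂ) = (Mᴴ * N).trace := by
  simp only [PiLp.inner_apply, RCLike.inner_apply, trace, diag_apply, mul_apply,
    conjTranspose_apply, toE, LinearMap.coe_mk, AddHom.coe_mk]
  rw [Fintype.sum_prod_type, Finset.sum_comm]
  simp [mul_comm]
  rfl

lemma fro_sq (M : Matrix n n ℂ) : fro M ^ 2 = ((Mᴴ * M).trace).re := by
  rw [fro, ← inner_self_eq_norm_sq (𝕜 := ℂ), inner_toE]
  rfl

lemma abs_trace_le (M N : Matrix n n ℂ) :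
    ‖(Mᴴ * N).trace‖ ≤ fro M * fro N := by
  rw [← inner_toE]
  exact norm_inner_le_norm _ _

/-- Column of a matrix as a Euclidean vector. -/
noncomputable def colE (M : Matrix n n ℂ) (j : n) : EuclideanSpace ℂ n := WithLp.toLp 2 (fun i => M i j)

lemma fro_sq_eq_sum_col (M : Matrix n n ℂ) :
    fro M ^ 2 = ∑ j, ‖colE M j‖ ^ 2 := by
  have h1 : fro M ^ 2 = ∑ p : n × n, ‖M p.1 p.2‖ ^ 2 := by
    rw [fro, EuclideanSpace.norm_eq, Real.sq_sqrt (by positivity)]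
    rfl
  have h2 : ∀ j, ‖colE M j‖ ^ 2 = ∑ i, ‖M i j‖ ^ 2 := fun j => by
    rw [EuclideanSpace.norm_eq, Real.sq_sqrt (by positivity)]
    rfl
  rw [h1, Fintype.sum_prod_type, Finset.sum_comm]
  simp [h2]

lemma fro_mul_le (X M : Matrix n n ℂ) : fro (X * M) ≤ ‖X‖ * fro M := by
  have h2 : fro (X * M) ^ 2 ≤ (‖X‖ * fro M) ^ 2 := by
    rw [fro_sq_eq_sum_col]
    have hterm : ∀ j, ‖colE (X * M) j‖ ^ 2 ≤ ‖X‖ ^ 2 * ‖colE M j‖ ^ 2 := by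
      intro j
      have hcol : colE (X * M) j = (EuclideanSpace.equiv n ℂ).symm (X *ᵥ (colE M j)) := by
        ext i
        simp [colE, mul_apply, mulVec, dotProduct]
      have h := X.l2_opNorm_mulVec (colE M j)
      rw [← hcol] at h
      calc ‖colE (X * M) j‖ ^ 2 ≤ (‖X‖ * ‖colE M j‖) ^ 2 :=
            pow_le_pow_left₀ (norm_nonneg _) h 2
        _ = ‖X‖ ^ 2 * ‖colE M j‖ ^ 2 := mul_pow _ _ _
    calc ∑ j, ‖colE (X * M) j‖ ^ 2 ≤ ∑ j, ‖X‖ ^ 2 * ‖colE M j‖ ^ 2 :=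
          Finset.sum_le_sum fun j _ => hterm j
      _ = ‖X‖ ^ 2 * fro M ^ 2 := by rw [← Finset.mul_sum, fro_sq_eq_sum_col]
      _ = (‖X‖ * fro M) ^ 2 := (mul_pow _ _ _).symm
  calc fro (X * M) = Real.sqrt (fro (X * M) ^ 2) := (Real.sqrt_sq (fro_nonneg _)).symm
    _ ≤ Real.sqrt ((‖X‖ * fro M) ^ 2) := Real.sqrt_le_sqrt h2
    _ = ‖X‖ * fro M := Real.sqrt_sq (mul_nonneg (norm_nonneg _) (fro_nonneg _))

lemma fro_pow_mul_le (R M : Matrix n n ℂ) (k : ℕ) : fro (R ^ k * M) ≤ ‖R‖ ^ k * fro M := by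
  induction k with
  | zero => simp
  | succ k ih =>
      have : R ^ (k + 1) * M = R * (R ^ k * M) := by rw [pow_succ', mul_assoc]
      rw [this]
      calc fro (R * (R ^ k * M)) ≤ ‖R‖ * fro (R ^ k * M) := fro_mul_le _ _
        _ ≤ ‖R‖ * (‖R‖ ^ k * fro M) :=
            mul_le_mul_of_nonneg_left ih (norm_nonneg _)
        _ = ‖R‖ ^ (k + 1) * fro M := by ring

lemma fro_smul (c : ℂ) (M : Matrix n n ℂ) : fro (c • M) = ‖c‖ * fro M := by
  rw [fro, _root_.map_smul, norm_smul]; rfl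

lemma fro_sum_le {ι : Type*} (s : Finset ι) (f : ι → Matrix n n ℂ) :
    fro (∑ i ∈ s, f i) ≤ ∑ i ∈ s, fro (f i) := by
  rw [fro, map_sum]
  exact norm_sum_le _ _

lemma rearr (c : ℕ) (X Y S : Matrix n n ℂ) :
    X * Y * (c : Matrix n n ℂ) * S = (c : ℂ) • (X * (Y * S)) := by
  calc X * Y * (c : Matrix n n ℂ) * S = X * Y * ((c : Matrix n n ℂ) * S) := by
        rw [mul_assoc]
    _ = X * Y * ((c : ℂ) • S) := by rw [← nsmul_eq_mul, Nat.cast_smul_eq_nsmul]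
    _ = (c : ℂ) • (X * (Y * S)) := by rw [mul_smul_comm, mul_assoc]

end CommSubAux

/-- `a_j = tr(Q^j · ρ · (Q†)^j)`, a nonnegative real number. -/
noncomputable def ktA {n : Type*} [Fintype n] [DecidableEq n]
    (ρ Q : Matrix n n ℂ) (j : ℕ) : ℝ :=
  ((Q ^ j * ρ * Qᴴ ^ j).trace).re

open CommSubAux

/-- Commutators of local observables with powers of the order parameter are subleading:
`|tr(ρ (O⁻)^{m'} [A, (O⁺)^m])| ≤ 2‖A‖ (1 + oa/x)^{m'} ((1 + oa/x)^m − 1) √(a_m a_{m'})`. -/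
theorem commutator_subleading
    {n : Type*} [Fintype n] [DecidableEq n] [Nonempty n]
    (ρ : Matrix n n ℂ) (hρ : ρ.PosSemidef) (hρtr : ρ.trace = 1)
    (Op Q R A : Matrix n n ℂ)
    (hOp : Op = Q + R) (hQR : Q * R = R * Q) (hQA : Q * A = A * Q)
    (o a x : ℝ) (ho : 0 < o) (ha : 1 ≤ a) (hx : 0 < x)
    (hRn : ‖R‖ ≤ o * a)
    (m m' : ℕ)
    (ham : 0 < ktA ρ Q m) (ham' : 0 < ktA ρ Q m')
    (hdecay : ∀ k ≤ m, ktA ρ Q (m - k) ≤ (x ^ (2 * k))⁻¹ * ktA ρ Q m)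
    (hdecay' : ∀ k ≤ m', ktA ρ Q (m' - k) ≤ (x ^ (2 * k))⁻¹ * ktA ρ Q m') :
    ‖(ρ * Opᴴ ^ m' * (A * Op ^ m - Op ^ m * A)).trace‖
      ≤ 2 * ‖A‖ * (1 + o * a / x) ^ m' * ((1 + o * a / x) ^ m - 1) *
          Real.sqrt (ktA ρ Q m * ktA ρ Q m') := by
  classical
  set t : ℝ := o * a / x with ht_def
  have ht0 : 0 ≤ t := by positivity
  have hoa : (0:ℝ) ≤ o * a := by positivity
  set S := CFC.sqrt ρ with hS_def
  have hSH : Sᴴ = S := (Matrix.nonneg_iff_posSemidef.mp (CFC.sqrt_nonneg ρ)).1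
  have hSS : S * S = ρ := CFC.sqrt_mul_sqrt_self ρ (Matrix.nonneg_iff_posSemidef.mpr hρ)
  -- `ktA` as the square of a Frobenius norm
  have hktA : ∀ j : ℕ, ktA ρ Q j = fro (Q ^ j * S) ^ 2 := by
    intro j
    rw [ktA, fro_sq]
    congr 1
    have h1 : Q ^ j * ρ * Qᴴ ^ j = (Q ^ j * S) * (S * Qᴴ ^ j) := by
      rw [← hSS]; simp only [mul_assoc]
    rw [h1, Matrix.trace_mul_comm, conjTranspose_mul, conjTranspose_pow, hSH]
  have hfro_eq : ∀ j : ℕ, fro (Q ^ j * S) = Real.sqrt (ktA ρ Q j) := fun j => by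
    rw [hktA j, Real.sqrt_sq (fro_nonneg _)]
  -- decay in Frobenius form
  have hQ_bound : ∀ N : ℕ,
      (∀ k ≤ N, ktA ρ Q (N - k) ≤ (x ^ (2 * k))⁻¹ * ktA ρ Q N) →
      ∀ k ≤ N, fro (Q ^ (N - k) * S) ≤ x⁻¹ ^ k * Real.sqrt (ktA ρ Q N) := by
    intro N hdec k hk
    rw [hfro_eq]
    refine le_trans (Real.sqrt_le_sqrt (hdec k hk)) ?_
    rw [Real.sqrt_mul (by positivity), Real.sqrt_inv]
    have hxx : Real.sqrt (x ^ (2 * k)) = x ^ k := by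
      rw [mul_comm 2 k, pow_mul, Real.sqrt_sq (pow_nonneg hx.le k)]
    rw [hxx, inv_pow]
  -- binomial expansion of `Op ^ N * S`
  have hc : Commute R Q := hQR.symm
  have hOpS : ∀ N : ℕ, Op ^ N * S
      = ∑ k ∈ Finset.range (N + 1), ((N.choose k : ℂ)) • (R ^ k * (Q ^ (N - k) * S)) := by
    intro N
    rw [hOp, add_comm Q R, hc.add_pow, Finset.sum_mul]
    exact Finset.sum_congr rfl fun k _ => rearr _ _ _ _
  -- bound on `fro (Op ^ m' * S)`
  have hUb : fro (Op ^ m' * S) ≤ (1 + t) ^ m' * Real.sqrt (ktA ρ Q m') := by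
    rw [hOpS m']
    refine le_trans (fro_sum_le _ _) ?_
    have hterm : ∀ k ∈ Finset.range (m' + 1),
        fro ((m'.choose k : ℂ) • (R ^ k * (Q ^ (m' - k) * S)))
          ≤ (m'.choose k : ℝ) * t ^ k * Real.sqrt (ktA ρ Q m') := by
      intro k hk
      have hk' : k ≤ m' := Nat.lt_succ_iff.mp (Finset.mem_range.mp hk)
      rw [fro_smul, RCLike.norm_natCast, mul_assoc]
      refine mul_le_mul_of_nonneg_left ?_ (Nat.cast_nonneg _)
      have htk : t ^ k = (o * a) ^ k * x⁻¹ ^ k := by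
        rw [ht_def, div_eq_mul_inv, mul_pow]
      calc fro (R ^ k * (Q ^ (m' - k) * S)) ≤ ‖R‖ ^ k * fro (Q ^ (m' - k) * S) :=
            fro_pow_mul_le _ _ _
        _ ≤ (o * a) ^ k * (x⁻¹ ^ k * Real.sqrt (ktA ρ Q m')) :=
            mul_le_mul (pow_le_pow_left₀ (norm_nonneg R) hRn k)
              (hQ_bound m' hdecay' k hk') (fro_nonneg _) (pow_nonneg hoa k)
        _ = t ^ k * Real.sqrt (ktA ρ Q m') := by rw [htk]; ring
    refine le_trans (Finset.sum_le_sum hterm) ?_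
    have hbin : ∑ k ∈ Finset.range (m' + 1), (m'.choose k : ℝ) * t ^ k = (1 + t) ^ m' := by
      rw [add_comm (1:ℝ) t, add_pow]
      exact Finset.sum_congr rfl fun k _ => by ring
    rw [← Finset.sum_mul, hbin]
  -- commutator expansion
  have hQA' : Commute Q A := hQA
  have hCS : (A * Op ^ m - Op ^ m * A) * S
      = ∑ k ∈ Finset.range (m + 1),
          (m.choose k : ℂ) • ((A * R ^ k - R ^ k * A) * (Q ^ (m - k) * S)) := by
    rw [hOp, add_comm Q R, hc.add_pow, Finset.mul_sum, Finset.sum_mul,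
      ← Finset.sum_sub_distrib, Finset.sum_mul]
    refine Finset.sum_congr rfl fun k _ => ?_
    rw [sub_mul]
    have h1 : A * (R ^ k * Q ^ (m - k) * (m.choose k : Matrix n n ℂ)) * S
        = (m.choose k : ℂ) • ((A * R ^ k) * (Q ^ (m - k) * S)) := by
      rw [show A * (R ^ k * Q ^ (m - k) * (m.choose k : Matrix n n ℂ))
          = (A * R ^ k) * Q ^ (m - k) * (m.choose k : Matrix n n ℂ) by simp only [mul_assoc]]
      exact rearr _ _ _ _
    have h2 : (R ^ k * Q ^ (m - k) * (m.choose k : Matrix n n ℂ)) * A * S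
        = (m.choose k : ℂ) • ((R ^ k * A) * (Q ^ (m - k) * S)) := by
      have hmv : R ^ k * Q ^ (m - k) * (↑(m.choose k) : Matrix n n ℂ) * A
          = (R ^ k * A) * Q ^ (m - k) * (m.choose k : Matrix n n ℂ) := by
        rw [mul_assoc, (Nat.cast_commute (m.choose k) A).eq, ← mul_assoc,
          mul_assoc (R ^ k), (hQA'.pow_left (m - k)).eq, ← mul_assoc]
      rw [hmv]
      exact rearr _ _ _ _
    rw [h1, h2, ← smul_sub, ← sub_mul]
  -- bound on `fro ((A * Op^m - Op^m * A) * S)`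
  have hVb : fro ((A * Op ^ m - Op ^ m * A) * S)
      ≤ 2 * ‖A‖ * ((1 + t) ^ m - 1) * Real.sqrt (ktA ρ Q m) := by
    rw [hCS]
    refine le_trans (fro_sum_le _ _) ?_
    set g : ℕ → ℝ := fun k =>
      2 * ‖A‖ * Real.sqrt (ktA ρ Q m) * (if k = 0 then 0 else (m.choose k : ℝ) * t ^ k)
      with hg_def
    have hterm : ∀ k ∈ Finset.range (m + 1),
        fro ((m.choose k : ℂ) • ((A * R ^ k - R ^ k * A) * (Q ^ (m - k) * S))) ≤ g k := by
      intro k hk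
      have hk' : k ≤ m := Nat.lt_succ_iff.mp (Finset.mem_range.mp hk)
      by_cases hk0 : k = 0
      · subst hk0
        simp [hg_def, fro, map_zero]
      · rw [hg_def]
        simp only [if_neg hk0]
        rw [fro_smul, RCLike.norm_natCast]
        have hnormcomm : ‖A * R ^ k - R ^ k * A‖ ≤ 2 * ‖A‖ * (o * a) ^ k := by
          have hRk : ‖R ^ k‖ ≤ ‖R‖ ^ k := norm_pow_le' R (Nat.pos_of_ne_zero hk0)
          have hRk2 : ‖R‖ ^ k ≤ (o * a) ^ k := pow_le_pow_left₀ (norm_nonneg R) hRn k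
          calc ‖A * R ^ k - R ^ k * A‖ ≤ ‖A * R ^ k‖ + ‖R ^ k * A‖ := norm_sub_le _ _
            _ ≤ ‖A‖ * ‖R ^ k‖ + ‖R ^ k‖ * ‖A‖ := add_le_add (norm_mul_le _ _) (norm_mul_le _ _)
            _ = 2 * ‖A‖ * ‖R ^ k‖ := by ring
            _ ≤ 2 * ‖A‖ * (o * a) ^ k := by
                have := hRk.trans hRk2
                nlinarith [norm_nonneg A]
        have htk : t ^ k = (o * a) ^ k * x⁻¹ ^ k := by
          rw [ht_def, div_eq_mul_inv, mul_pow]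
        calc (m.choose k : ℝ) * fro ((A * R ^ k - R ^ k * A) * (Q ^ (m - k) * S))
            ≤ (m.choose k : ℝ) * ((2 * ‖A‖ * (o * a) ^ k) * (x⁻¹ ^ k * Real.sqrt (ktA ρ Q m))) := by
              refine mul_le_mul_of_nonneg_left ?_ (Nat.cast_nonneg _)
              calc fro ((A * R ^ k - R ^ k * A) * (Q ^ (m - k) * S))
                  ≤ ‖A * R ^ k - R ^ k * A‖ * fro (Q ^ (m - k) * S) := fro_mul_le _ _
                _ ≤ (2 * ‖A‖ * (o * a) ^ k) * (x⁻¹ ^ k * Real.sqrt (ktA ρ Q m)) :=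
                    mul_le_mul hnormcomm (hQ_bound m hdecay k hk') (fro_nonneg _)
                      (mul_nonneg (by positivity) (pow_nonneg hoa k))
          _ = 2 * ‖A‖ * Real.sqrt (ktA ρ Q m) * ((m.choose k : ℝ) * t ^ k) := by
              rw [htk]; ring
    refine le_trans (Finset.sum_le_sum hterm) ?_
    have h0 : (0:ℕ) ∈ Finset.range (m + 1) := Finset.mem_range.mpr (Nat.succ_pos m)
    have hbin : ∑ k ∈ Finset.range (m + 1), (m.choose k : ℝ) * t ^ k = (1 + t) ^ m := by
      rw [add_comm (1:ℝ) t, add_pow]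
      exact Finset.sum_congr rfl fun k _ => by ring
    have hsplit : (m.choose 0 : ℝ) * t ^ 0
        + ∑ k ∈ (Finset.range (m + 1)).erase 0, (m.choose k : ℝ) * t ^ k
        = ∑ k ∈ Finset.range (m + 1), (m.choose k : ℝ) * t ^ k :=
      Finset.add_sum_erase (Finset.range (m + 1)) (fun k => (m.choose k : ℝ) * t ^ k) h0
    have hgsum : ∑ k ∈ Finset.range (m + 1), g k
        = 2 * ‖A‖ * Real.sqrt (ktA ρ Q m) * ((1 + t) ^ m - 1) := by
      rw [hg_def, ← Finset.mul_sum]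
      congr 1
      rw [← Finset.add_sum_erase _ _ h0, if_pos rfl, zero_add]
      have heq : ∑ k ∈ (Finset.range (m + 1)).erase 0,
          (if k = 0 then (0:ℝ) else (m.choose k : ℝ) * t ^ k)
          = ∑ k ∈ (Finset.range (m + 1)).erase 0, (m.choose k : ℝ) * t ^ k :=
        Finset.sum_congr rfl fun k hk => if_neg (Finset.ne_of_mem_erase hk)
      rw [heq]
      have : ((m.choose 0 : ℝ) * t ^ 0) = 1 := by simp
      linarith [hsplit, hbin]
    rw [hgsum]; ring_nf; linarith [le_refl (0:ℝ)]
  -- Cauchy–Schwarz step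
  have htr : (ρ * Opᴴ ^ m' * (A * Op ^ m - Op ^ m * A)).trace
      = ((Op ^ m' * S)ᴴ * ((A * Op ^ m - Op ^ m * A) * S)).trace := by
    have h1 : (Op ^ m' * S)ᴴ * ((A * Op ^ m - Op ^ m * A) * S)
        = S * (Opᴴ ^ m' * (A * Op ^ m - Op ^ m * A)) * S := by
      rw [conjTranspose_mul, conjTranspose_pow, hSH]
      simp only [mul_assoc]
    rw [h1, Matrix.trace_mul_cycle S (Opᴴ ^ m' * (A * Op ^ m - Op ^ m * A)) S, hSS, mul_assoc]
  have hmain : ‖(ρ * Opᴴ ^ m' * (A * Op ^ m - Op ^ m * A)).trace‖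
      ≤ fro (Op ^ m' * S) * fro ((A * Op ^ m - Op ^ m * A) * S) := by
    rw [htr]
    exact abs_trace_le _ _
  have hfin : fro (Op ^ m' * S) * fro ((A * Op ^ m - Op ^ m * A) * S)
      ≤ ((1 + t) ^ m' * Real.sqrt (ktA ρ Q m'))
        * (2 * ‖A‖ * ((1 + t) ^ m - 1) * Real.sqrt (ktA ρ Q m)) :=
    mul_le_mul hUb hVb (fro_nonneg _)
      (mul_nonneg (pow_nonneg (by linarith) m') (Real.sqrt_nonneg _))
  refine le_trans hmain (le_trans hfin ?_)
  rw [Real.sqrt_mul ham.le]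
  ring_nf
  linarith [le_refl (0:ℝ)]
end
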